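/- Let Z : ℝ → ℝ be continuous and 2π-periodic, N, M coprime positive integers, and define Y(η) = (1/N) ∑_{j=0}^{N−1} Z((M/N)(2πj + η)). Then the average energy of Y equals V(0), i.e. (1/(2π)) ∫₀^{2π} Y(η)² dη = (1/N) ∑_{j=0}^{N−1} Q((M/N)·2πj), where Q(φ) = (1/(2π)) ∫₀^{2π} Z(θ+φ) Z(θ) dθ. -/

import Mathlib

open MeasureTheory Real Finset

private lemma integral_double_sum {a b : ℝ} {n m : ℕ} (g : ℕ → ℕ → ℝ → ℝ)
    (hg : ∀ j k, IntervalIntegrable (g j k) MeasureTheory.volume a b) :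
    (∫ x in a..b, ∑ j ∈ Finset.range n, ∑ k ∈ Finset.range m, g j k x)
      = ∑ j ∈ Finset.range n, ∑ k ∈ Finset.range m, ∫ x in a..b, g j k x := by
  have hint : ∀ j : ℕ, IntervalIntegrable (fun x => ∑ k ∈ Finset.range m, g j k x)
      MeasureTheory.volume a b := by
    intro j
    rw [← Finset.sum_fn]
    exact IntervalIntegrable.sum (Finset.range m) (fun k _ => hg j k)
  have h1 : (∫ x in a..b, ∑ j ∈ Finset.range n, ∑ k ∈ Finset.range m, g j k x)
      = ∑ j ∈ Finset.range n, ∫ x in a..b, ∑ k ∈ Finset.range m, g j k x :=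
    intervalIntegral.integral_finset_sum (f := fun j x => ∑ k ∈ Finset.range m, g j k x)
      (fun j _ => hint j)
  rw [h1]
  exact Finset.sum_congr rfl fun j _ => intervalIntegral.integral_finset_sum fun k _ => hg j k

theorem Y_energy_eq_V0
    (Z : ℝ → ℝ) (hZ : Continuous Z) (hper : ∀ θ, Z (θ + 2 * π) = Z θ)
    (N M : ℕ) (hN : 0 < N) (hM : 0 < M) (hcop : Nat.Coprime N M)
    (Q Y : ℝ → ℝ)
    (hQ : ∀ φ, Q φ = (1 / (2 * π)) * ∫ θ in (0:ℝ)..(2 * π), Z (θ + φ) * Z θ)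
    (hY : ∀ η, Y η = (1 / (N : ℝ)) *
      ∑ j ∈ Finset.range N, Z ((M / (N : ℝ)) * (2 * π * j + η))) :
    (1 / (2 * π)) * ∫ η in (0:ℝ)..(2 * π), (Y η) ^ 2 =
      (1 / (N : ℝ)) * ∑ j ∈ Finset.range N, Q ((M / (N : ℝ)) * (2 * π * j)) := by
  have hNne : (N : ℝ) ≠ 0 := Nat.cast_ne_zero.mpr hN.ne'
  obtain ⟨c, hc⟩ : ∃ c : ℝ, c = (M : ℝ) / N := ⟨_, rfl⟩
  rw [show ((M : ℝ) / N) = c from hc.symm] at hY ⊢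
  have hc0 : c ≠ 0 := by
    rw [hc]; exact div_ne_zero (Nat.cast_ne_zero.mpr hM.ne') hNne
  have hP : Function.Periodic Z (2 * π) := hper
  have per' : ∀ (n : ℤ) (x : ℝ), Z (x + (n : ℝ) * (2 * π)) = Z x :=
    fun n x => (hP.int_mul n) x
  -- the correlation integrand
  obtain ⟨F, hF⟩ : ∃ F : ℕ → ℝ → ℝ, F = fun (d : ℕ) (θ : ℝ) => Z (θ + c * (2 * π * (d:ℝ))) * Z θ := ⟨_, rfl⟩
  have hFcont : ∀ d, Continuous (F d) := fun d => by
    rw [hF]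
    exact (hZ.comp (continuous_id.add continuous_const)).mul hZ
  have hFper : ∀ d, Function.Periodic (F d) (2 * π) := by
    intro d x
    simp only [hF]
    rw [show x + 2 * π + c * (2 * π * d) = (x + c * (2 * π * d)) + 2 * π by ring,
      hper, hper]
  have hFint : ∀ d (a b : ℝ), IntervalIntegrable (F d) volume a b :=
    fun d a b => (hFcont d).intervalIntegrable a b
  -- Lemma: sum over k of shifted integrals equals N times one period integral
  have hsum : ∀ d : ℕ,
      ∑ k ∈ Finset.range N, ∫ η in (0:ℝ)..(2 * π), F d (c * η + c * (2 * π * k))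
        = (N : ℝ) * ∫ θ in (0:ℝ)..(2 * π), F d θ := by
    intro d
    have step : ∀ k : ℕ,
        (∫ η in (0:ℝ)..(2 * π), F d (c * η + c * (2 * π * k)))
          = c⁻¹ * ∫ θ in (c * (2 * π * k))..(c * (2 * π * (k + 1))), F d θ := by
      intro k
      rw [intervalIntegral.integral_comp_mul_add (F d) hc0 (c * (2 * π * k))]
      rw [smul_eq_mul, show c * 0 + c * (2 * π * (k:ℝ)) = c * (2 * π * (k:ℝ)) by ring,
        show c * (2 * π) + c * (2 * π * (k:ℝ)) = c * (2 * π * ((k:ℝ) + 1)) by ring]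
    rw [Finset.sum_congr rfl fun k _ => step k, ← Finset.mul_sum]
    have adj := intervalIntegral.sum_integral_adjacent_intervals
      (f := F d) (μ := volume) (a := fun k : ℕ => c * (2 * π * k)) (n := N)
      (fun k _ => hFint d _ _)
    push_cast at adj
    rw [adj]
    have hend : c * (2 * π * (N : ℝ)) = 0 + (M : ℤ) • (2 * π) := by
      simp only [zsmul_eq_mul, Int.cast_natCast, zero_add]
      field_simp [hc]
      rw [hc, div_mul_cancel₀ _ hNne]
    rw [show c * (2 * π * (0:ℝ)) = (0:ℝ) by ring, hend,
      Function.Periodic.intervalIntegral_add_zsmul_eq (hFper d) (M : ℤ) 0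
        (fun a b => hFint d a b)]
    simp only [zsmul_eq_mul, Int.cast_natCast, zero_add]
    field_simp [hc]
    have h' : c * (N : ℝ) = M := by rw [hc, div_mul_cancel₀ _ hNne]
    linear_combination -(∫ θ in (0:ℝ)..(2 * π), F d θ) * h'
  -- pointwise identity relating product terms to F
  have hpoint : ∀ j k : ℕ, j < N → k < N → ∀ η : ℝ,
      Z (c * (2 * π * j + η)) * Z (c * (2 * π * k + η))
        = F ((j + N - k) % N) (c * η + c * (2 * π * k)) := by
    intro j k hjN hkN η
    simp only [hF]
    have hkle : k ≤ j + N := by omega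
    set d := (j + N - k) % N with hd
    set m := (j + N - k) / N with hm
    have hmd : N * m + d = j + N - k := Nat.div_add_mod _ _
    have hnat : N * m + d + k = j + N := by
      rw [hmd, Nat.sub_add_cancel hkle]
    have hj : (j : ℝ) = (k : ℝ) + (d : ℝ) + (N : ℝ) * ((m : ℝ) - 1) := by
      have := congrArg (Nat.cast : ℕ → ℝ) hnat
      push_cast at this
      linarith
    have harg : c * (2 * π * (j : ℝ) + η)
        = (c * η + c * (2 * π * (k : ℝ)) + c * (2 * π * (d : ℝ)))
          + (((M : ℤ) * ((m : ℤ) - 1) : ℤ) : ℝ) * (2 * π) := by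
      rw [hj, hc]
      push_cast
      field_simp
      ring
    rw [show c * (2 * π * (k : ℝ) + η) = c * η + c * (2 * π * (k : ℝ)) by ring,
      harg, per']
  -- integrability of product terms
  have hint2 : ∀ j k : ℕ, IntervalIntegrable
      (fun η => Z (c * (2 * π * j + η)) * Z (c * (2 * π * k + η))) volume 0 (2 * π) := by
    intro j k
    exact (((hZ.comp (continuous_const.mul (continuous_const.add continuous_id))).mul
      (hZ.comp (continuous_const.mul (continuous_const.add continuous_id))))).intervalIntegrable _ _
  -- expand the square
  have hL : ∀ η : ℝ, Y η ^ 2 = (1 / (N : ℝ)) ^ 2 * ∑ j ∈ Finset.range N, ∑ k ∈ Finset.range N,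
      Z (c * (2 * π * j + η)) * Z (c * (2 * π * k + η)) := by
    intro η
    rw [hY, mul_pow, sq (∑ j ∈ Finset.range N, Z (c * (2 * π * j + η))),
      Finset.sum_mul_sum]
  have hInt : (∫ η in (0:ℝ)..(2 * π), (Y η) ^ 2)
      = (1 / (N : ℝ)) ^ 2 * ∑ j ∈ Finset.range N, ∑ k ∈ Finset.range N,
        ∫ η in (0:ℝ)..(2 * π), Z (c * (2 * π * j + η)) * Z (c * (2 * π * k + η)) := by
    rw [intervalIntegral.integral_congr (g := fun η => (1 / (N : ℝ)) ^ 2 *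
        ∑ j ∈ Finset.range N, ∑ k ∈ Finset.range N,
          Z (c * (2 * π * j + η)) * Z (c * (2 * π * k + η)))
        (fun η _ => hL η),
      intervalIntegral.integral_const_mul]
    congr 1
    exact integral_double_sum _ (fun j k => hint2 j k)
  -- compute the double sum
  have hdouble : ∑ j ∈ Finset.range N, ∑ k ∈ Finset.range N,
      (∫ η in (0:ℝ)..(2 * π), Z (c * (2 * π * j + η)) * Z (c * (2 * π * k + η)))
        = ∑ d ∈ Finset.range N, (N : ℝ) * ∫ θ in (0:ℝ)..(2 * π), F d θ := by
    rw [Finset.sum_comm]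
    have hk : ∀ k ∈ Finset.range N, ∑ j ∈ Finset.range N,
        (∫ η in (0:ℝ)..(2 * π), Z (c * (2 * π * j + η)) * Z (c * (2 * π * k + η)))
          = ∑ d ∈ Finset.range N, ∫ η in (0:ℝ)..(2 * π), F d (c * η + c * (2 * π * k)) := by
      intro k hkN
      rw [Finset.mem_range] at hkN
      have hterm : ∀ j ∈ Finset.range N,
          (∫ η in (0:ℝ)..(2 * π), Z (c * (2 * π * j + η)) * Z (c * (2 * π * k + η)))
            = ∫ η in (0:ℝ)..(2 * π), F ((j + N - k) % N) (c * η + c * (2 * π * k)) := by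
        intro j hjN
        rw [Finset.mem_range] at hjN
        exact intervalIntegral.integral_congr (fun η _ => hpoint j k hjN hkN η)
      rw [Finset.sum_congr rfl hterm]
      refine Finset.sum_nbij' (fun j => (j + N - k) % N) (fun d => (d + k) % N)
        ?_ ?_ ?_ ?_ ?_
      · intro j hj
        exact Finset.mem_range.mpr (Nat.mod_lt _ hN)
      · intro d hd
        exact Finset.mem_range.mpr (Nat.mod_lt _ hN)
      · intro j hj
        rw [Finset.mem_range] at hj
        show ((j + N - k) % N + k) % N = j
        rw [Nat.mod_add_mod, show j + N - k + k = j + N from by omega,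
          Nat.add_mod_right, Nat.mod_eq_of_lt hj]
      · intro d hd
        rw [Finset.mem_range] at hd
        show ((d + k) % N + N - k) % N = d
        rw [show (d + k) % N + N - k = (d + k) % N + (N - k) from by omega,
          Nat.mod_add_mod, show d + k + (N - k) = d + N from by omega,
          Nat.add_mod_right, Nat.mod_eq_of_lt hd]
      · intro j hj
        rfl
    rw [Finset.sum_congr rfl hk, Finset.sum_comm]
    exact Finset.sum_congr rfl fun d _ => hsum d
  -- put everything together
  rw [hInt, hdouble]
  have hRHS : ∀ d ∈ Finset.range N, Q (c * (2 * π * (d : ℝ)))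
      = (1 / (2 * π)) * ∫ θ in (0:ℝ)..(2 * π), F d θ := by
    intro d _
    rw [hQ]
    simp only [hF]
  rw [Finset.sum_congr rfl hRHS, Finset.mul_sum, Finset.mul_sum, Finset.mul_sum]
  refine Finset.sum_congr rfl fun d _ => ?_
  field_simp
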